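/- Let T be a complete theory and φ(z̄,ȳ,x̄) a formula such that T proves ∀z̄ x̄ ȳ1 ȳ2 (φ(z̄,ȳ1,x̄) ∧ φ(z̄,ȳ2,x̄) → ȳ1 = ȳ2). If there exist infinite cardinals λ0, κ0, a model M of T and tuples āᵢ (i < κ0), b̄_η (η ∈ κ0>λ0) and c̄_ν (ν ∈ κ0λ0) from M satisfying clauses (a) and (b) of the oak property, then for every pair of infinite cardinals λ, κ such witnesses exist; in particular T has the oak property witnessed by φ. -/

import Mathlib

open FirstOrder FirstOrder.Language Cardinal

namespace OakAux

variable {L : FirstOrder.Language.{0, 0}} {dz dy dx : ℕ}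

/-- index type for the new constants -/
abbrev Idx (dz dy dx : ℕ) (A Λ : Type) [LT A] : Type :=
  (A × Fin dx) ⊕ ((Σ i : A, ({j : A // j < i} → Λ)) × Fin dy) ⊕ ((A → Λ) × Fin dz)

variable {A Λ : Type} [LT A]

noncomputable def sentA (φ : L.Formula (Fin dz ⊕ Fin dy ⊕ Fin dx))
    (ν : A → Λ) (i : A) : (L[[Idx dz dy dx A Λ]]).Sentence :=
  ((L.lhomWithConstants (Idx dz dy dx A Λ)).onFormula φ).subst
    (Sum.elim (fun t => Constants.term (L.con (Sum.inr (Sum.inr (ν, t)))))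
      (Sum.elim
        (fun t => Constants.term (L.con (Sum.inr (Sum.inl (⟨⟨i, fun j => ν j.1⟩, t⟩)))))
        (fun t => Constants.term (L.con (Sum.inl (i, t))))))

noncomputable def formB (φ : L.Formula (Fin dz ⊕ Fin dy ⊕ Fin dx))
    (ν : A → Λ) (i : A) : (L[[Idx dz dy dx A Λ]]).Formula (Fin dy) :=
  ((L.lhomWithConstants (Idx dz dy dx A Λ)).onFormula φ).subst
    (Sum.elim (fun t => Constants.term (L.con (Sum.inr (Sum.inr (ν, t)))))
      (Sum.elim (fun t => Term.var t)
        (fun t => Constants.term (L.con (Sum.inl (i, t))))))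

noncomputable def sentB (φ : L.Formula (Fin dz ⊕ Fin dy ⊕ Fin dx))
    (ν₁ ν₂ : A → Λ) (i : A) : (L[[Idx dz dy dx A Λ]]).Sentence :=
  (Formula.iExs (Fin dy) (((formB φ ν₁ i) ⊓ (formB φ ν₂ i)).relabel (Sum.inr : Fin dy → Empty ⊕ Fin dy))).not

variable {M : Type} [L.Structure M] [(L[[Idx dz dy dx A Λ]]).Structure M]
  [(L.lhomWithConstants (Idx dz dy dx A Λ)).IsExpansionOn M]

/-- value of a constant -/
noncomputable def cval (g : Idx dz dy dx A Λ) : M :=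
  ((L.con g : (L[[Idx dz dy dx A Λ]]).Constants) : M)

theorem realize_sentA_iff (φ : L.Formula (Fin dz ⊕ Fin dy ⊕ Fin dx)) (ν : A → Λ) (i : A) :
    (sentA φ ν i).Realize M ↔
      φ.Realize (M := M) (Sum.elim (fun t => cval (L := L) (Sum.inr (Sum.inr (ν, t)) : Idx dz dy dx A Λ))
        (Sum.elim (fun t => cval (L := L) (Sum.inr (Sum.inl (⟨⟨i, fun j => ν j.1⟩, t⟩)) : Idx dz dy dx A Λ))
          (fun t => cval (L := L) (Sum.inl (i, t) : Idx dz dy dx A Λ)))) := by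
  rw [sentA, Sentence.Realize, Formula.Realize, BoundedFormula.realize_subst,
    LHom.onFormula, LHom.realize_onBoundedFormula]
  rw [Formula.Realize]
  apply iff_of_eq; congr 1; funext v; rcases v with t | t | t <;>
    simp [cval, Term.realize_constants, constantMap]

theorem realize_sentB_iff (φ : L.Formula (Fin dz ⊕ Fin dy ⊕ Fin dx)) (ν₁ ν₂ : A → Λ) (i : A) :
    (sentB φ ν₁ ν₂ i).Realize M ↔
      ¬ ∃ y : Fin dy → M,
        φ.Realize (M := M) (Sum.elim (fun t => cval (L := L) (Sum.inr (Sum.inr (ν₁, t)) : Idx dz dy dx A Λ))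
          (Sum.elim y (fun t => cval (L := L) (Sum.inl (i, t) : Idx dz dy dx A Λ)))) ∧
        φ.Realize (M := M) (Sum.elim (fun t => cval (L := L) (Sum.inr (Sum.inr (ν₂, t)) : Idx dz dy dx A Λ))
          (Sum.elim y (fun t => cval (L := L) (Sum.inl (i, t) : Idx dz dy dx A Λ)))) := by
  rw [sentB, Sentence.Realize, Formula.realize_not, Formula.realize_iExs]
  apply not_congr
  refine exists_congr fun y => ?_
  rw [Formula.realize_relabel, Sum.elim_comp_inr]
  rw [Formula.realize_inf]
  apply and_congr <;>
  · rw [formB, Formula.Realize, BoundedFormula.realize_subst,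
      LHom.onFormula, LHom.realize_onBoundedFormula]
    rw [Formula.Realize]
    apply iff_of_eq; congr 1; funext v; rcases v with t | t | t <;>
      simp [cval, Term.realize_constants, constantMap]

variable (T : L.Theory)

/-- partial theory of the oak pattern, for a finite piece of the tree -/
def partTheory (φ : L.Formula (Fin dz ⊕ Fin dy ⊕ Fin dx))
    (S : Finset A × Finset (A → Λ)) : (L[[Idx dz dy dx A Λ]]).Theory :=
  (L.lhomWithConstants (Idx dz dy dx A Λ)).onTheory T ∪
  {s | ∃ ν ∈ S.2, ∃ i ∈ S.1, s = sentA φ ν i} ∪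
  {s | ∃ ν₁ ∈ S.2, ∃ ν₂ ∈ S.2, ∃ j ∈ S.1, ∃ i ∈ S.1,
    (∀ j' < j, ν₁ j' = ν₂ j') ∧ ν₁ j ≠ ν₂ j ∧ j < i ∧ s = sentB φ ν₁ ν₂ i}

end OakAux

namespace OakAux

theorem partTheory_isSatisfiable {L : FirstOrder.Language.{0, 0}} {dz dy dx : ℕ}
    {A Λ : Type} [LinearOrder A] [Nonempty Λ]
    {A₀ Λ₀ : Type} [LinearOrder A₀] [Nonempty A₀] [NoMaxOrder A₀] [Infinite Λ₀]
    (T : L.Theory) (φ : L.Formula (Fin dz ⊕ Fin dy ⊕ Fin dx))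
    (M₀ : FirstOrder.Language.Theory.ModelType.{0, 0, 0} T)
    (a₀ : A₀ → Fin dx → M₀)
    (b₀ : (Σ i : A₀, ({j : A₀ // j < i} → Λ₀)) → Fin dy → M₀)
    (c₀ : (A₀ → Λ₀) → Fin dz → M₀)
    (h_a : ∀ (ν : A₀ → Λ₀) (i : A₀),
      φ.Realize (Sum.elim (c₀ ν) (Sum.elim (b₀ ⟨i, fun j => ν j.val⟩) (a₀ i))))
    (h_b : ∀ (ν₁ ν₂ : A₀ → Λ₀) (j : A₀),
      (∀ j' : A₀, j' < j → ν₁ j' = ν₂ j') → ν₁ j ≠ ν₂ j →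
      ∀ i : A₀, j < i →
        ¬ ∃ y : Fin dy → M₀,
          φ.Realize (Sum.elim (c₀ ν₁) (Sum.elim y (a₀ i))) ∧
          φ.Realize (Sum.elim (c₀ ν₂) (Sum.elim y (a₀ i))))
    (S : Finset A × Finset (A → Λ)) :
    (partTheory (A := A) (Λ := Λ) T φ S).IsSatisfiable := by
  classical
  obtain ⟨f, hf⟩ := Nat.exists_strictMono A₀
  let natΛ : ℕ ↪ Λ₀ := Infinite.natEmbedding Λ₀
  -- the order embedding of S.1 into A₀
  let iso := S.1.orderIsoOfFin rfl
  let e : A → A₀ := fun a => if h : a ∈ S.1 then f (iso.symm ⟨a, h⟩) else f 0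
  have he_lt : ∀ {a a'}, a ∈ S.1 → a' ∈ S.1 → a < a' → e a < e a' := by
    intro a a' ha ha' hlt
    simp only [e, dif_pos ha, dif_pos ha']
    exact hf (by exact_mod_cast iso.symm.lt_iff_lt.2 (by exact_mod_cast hlt))
  have he_inj : ∀ {a a'}, a ∈ S.1 → a' ∈ S.1 → e a = e a' → a = a' := by
    intro a a' ha ha' heq
    rcases lt_trichotomy a a' with h | h | h
    · exact absurd heq (ne_of_lt (he_lt ha ha' h))
    · exact h
    · exact absurd heq.symm (ne_of_lt (he_lt ha' ha h))
  have he_reflect : ∀ {a a'}, a ∈ S.1 → a' ∈ S.1 → e a < e a' → a < a' := by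
    intro a a' ha ha' hlt
    rcases lt_trichotomy a a' with h | h | h
    · exact h
    · exact absurd (h ▸ rfl) (ne_of_lt hlt)
    · exact absurd (he_lt ha' ha h) (lt_asymm hlt)
  -- an injection of branches into Λ₀
  let gbr : (A → Λ) → Λ₀ := fun ν => if h : ν ∈ S.2 then natΛ (S.2.equivFin ⟨ν, h⟩) else natΛ 0
  have gbr_inj : ∀ {ν ν'}, ν ∈ S.2 → ν' ∈ S.2 → gbr ν = gbr ν' → ν = ν' := by
    intro ν ν' hν hν' hg
    simp only [gbr, dif_pos hν, dif_pos hν'] at hg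
    have hfin := Fin.val_injective (natΛ.injective hg)
    exact congrArg Subtype.val (S.2.equivFin.injective hfin)
  -- the level-wise value translation
  let F : A → Λ → Λ₀ := fun j v => if h : ∃ ν ∈ S.2, ν j = v then gbr h.choose else natΛ 0
  have F_inj : ∀ {ν₁ ν₂ : A → Λ}, ν₁ ∈ S.2 → ν₂ ∈ S.2 → ∀ j,
      F j (ν₁ j) = F j (ν₂ j) → ν₁ j = ν₂ j := by
    intro ν₁ ν₂ h1 h2 j hF
    have e1 : ∃ ν ∈ S.2, ν j = ν₁ j := ⟨ν₁, h1, rfl⟩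
    have e2 : ∃ ν ∈ S.2, ν j = ν₂ j := ⟨ν₂, h2, rfl⟩
    simp only [F, dif_pos e1, dif_pos e2] at hF
    have := gbr_inj e1.choose_spec.1 e2.choose_spec.1 hF
    rw [← e1.choose_spec.2, ← e2.choose_spec.2, this]
  -- translation of branches
  let E : (A → Λ) → (A₀ → Λ₀) := fun ν j₀ =>
    if h : ∃ j ∈ S.1, e j = j₀ then F h.choose (ν h.choose) else natΛ 0
  have E_spec : ∀ (ν : A → Λ) {j}, j ∈ S.1 → E ν (e j) = F j (ν j) := by
    intro ν j hj
    have h : ∃ j' ∈ S.1, e j' = e j := ⟨j, hj, rfl⟩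
    have hch := h.choose_spec
    have : h.choose = j := he_inj hch.1 hj hch.2
    simp only [E, dif_pos h, this]
  have agree_below : ∀ (ν ν' : A → Λ) {i : A}, i ∈ S.1 → (∀ j < i, ν j = ν' j) →
      ∀ j₀ < e i, E ν j₀ = E ν' j₀ := by
    intro ν ν' i hi hag j₀ hj₀
    by_cases h : ∃ j ∈ S.1, e j = j₀
    · have hch := h.choose_spec
      have hlt : h.choose < i := by
        apply he_reflect hch.1 hi
        rw [hch.2]; exact hj₀
      simp only [E, dif_pos h, hag _ hlt]
    · simp only [E, dif_neg h]
  -- the extension of a partial branch by junk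
  let ext : (Σ i : A, ({j : A // j < i} → Λ)) → (A → Λ) := fun q j =>
    if h : j < q.1 then q.2 ⟨j, h⟩ else Classical.arbitrary Λ
  -- interpretation of the constants in M₀
  let interp : Idx dz dy dx A Λ → M₀ :=
    Sum.elim (fun p => a₀ (e p.1) p.2)
      (Sum.elim (fun p => b₀ ⟨e p.1.1, fun j₀ => E (ext p.1) j₀.1⟩ p.2)
        (fun p => c₀ (E p.1) p.2))
  letI : (constantsOn (Idx dz dy dx A Λ)).Structure M₀ := constantsOn.structure interp
  have cval_eq : ∀ g : Idx dz dy dx A Λ, (cval (L := L) g : M₀) = interp g := fun g => rfl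
  have hmodel : (M₀ : Type) ⊨ partTheory (A := A) (Λ := Λ) T φ S := by
    rw [partTheory, Theory.model_union_iff, Theory.model_union_iff]
    refine ⟨⟨(LHom.onTheory_model _ T).2 M₀.is_model, ?_⟩, ?_⟩
    · rw [Theory.model_iff]
      rintro s ⟨ν, hν, i, hi, rfl⟩
      rw [realize_sentA_iff]
      simp only [cval_eq]
      have hb_eq : (fun j₀ : {j₀ : A₀ // j₀ < e i} => E (ext ⟨i, fun j => ν j.1⟩) j₀.1) =
          (fun j₀ : {j₀ : A₀ // j₀ < e i} => E ν j₀.1) := by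
        funext j₀
        exact agree_below _ _ hi (fun j hj => by simp only [ext, dif_pos hj]) j₀.1 j₀.2
      show φ.Realize (Sum.elim (c₀ (E ν))
        (Sum.elim (b₀ ⟨e i, fun j₀ => E (ext ⟨i, fun j => ν j.1⟩) j₀.1⟩) (a₀ (e i))))
      rw [hb_eq]
      exact h_a (E ν) (e i)
    · rw [Theory.model_iff]
      rintro s ⟨ν₁, h1, ν₂, h2, j, hj, i, hi, hag, hne, hji, rfl⟩
      rw [realize_sentB_iff]
      simp only [cval_eq]
      show ¬ ∃ y : Fin dy → M₀,
        φ.Realize (Sum.elim (c₀ (E ν₁)) (Sum.elim y (a₀ (e i)))) ∧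
        φ.Realize (Sum.elim (c₀ (E ν₂)) (Sum.elim y (a₀ (e i))))
      refine h_b (E ν₁) (E ν₂) (e j) (agree_below ν₁ ν₂ hj hag) ?_ (e i) (he_lt hj hi hji)
      rw [E_spec ν₁ hj, E_spec ν₂ hj]
      exact fun hF => hne (F_inj h1 h2 j hF)
  haveI : (M₀ : Type) ⊨ partTheory (A := A) (Λ := Λ) T φ S := hmodel
  exact Theory.Model.isSatisfiable (M₀ : Type)

theorem oak_transfer {L : FirstOrder.Language.{0, 0}} (T : L.Theory) {dz dy dx : ℕ}
    (φ : L.Formula (Fin dz ⊕ Fin dy ⊕ Fin dx))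
    (κ₀ lam₀ : Cardinal.{0}) (hκ₀ : Cardinal.aleph0 ≤ κ₀) (hlam₀ : Cardinal.aleph0 ≤ lam₀)
    (M₀ : FirstOrder.Language.Theory.ModelType.{0, 0, 0} T)
    (a₀ : κ₀.ord.ToType → Fin dx → M₀)
    (b₀ : (Σ i : κ₀.ord.ToType, ({j : κ₀.ord.ToType // j < i} → lam₀.ord.ToType)) → Fin dy → M₀)
    (c₀ : (κ₀.ord.ToType → lam₀.ord.ToType) → Fin dz → M₀)
    (h_a : ∀ (ν : κ₀.ord.ToType → lam₀.ord.ToType) (i : κ₀.ord.ToType),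
      φ.Realize (Sum.elim (c₀ ν) (Sum.elim (b₀ ⟨i, fun j => ν j.val⟩) (a₀ i))))
    (h_b : ∀ (ν₁ ν₂ : κ₀.ord.ToType → lam₀.ord.ToType) (j : κ₀.ord.ToType),
      (∀ j' : κ₀.ord.ToType, j' < j → ν₁ j' = ν₂ j') → ν₁ j ≠ ν₂ j →
      ∀ i : κ₀.ord.ToType, j < i →
        ¬ ∃ y : Fin dy → M₀,
          φ.Realize (Sum.elim (c₀ ν₁) (Sum.elim y (a₀ i))) ∧
          φ.Realize (Sum.elim (c₀ ν₂) (Sum.elim y (a₀ i))))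
    (κ lam : Cardinal.{0}) (hκ : Cardinal.aleph0 ≤ κ) (hlam : Cardinal.aleph0 ≤ lam) :
    ∃ (M : FirstOrder.Language.Theory.ModelType.{0, 0, 0} T)
      (a : κ.ord.ToType → Fin dx → M)
      (b : (Σ i : κ.ord.ToType, ({j : κ.ord.ToType // j < i} → lam.ord.ToType)) → Fin dy → M)
      (c : (κ.ord.ToType → lam.ord.ToType) → Fin dz → M),
      (∀ (ν : κ.ord.ToType → lam.ord.ToType) (i : κ.ord.ToType),
        φ.Realize (Sum.elim (c ν) (Sum.elim (b ⟨i, fun j => ν j.val⟩) (a i)))) ∧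
      (∀ (ν₁ ν₂ : κ.ord.ToType → lam.ord.ToType) (j : κ.ord.ToType),
        (∀ j' : κ.ord.ToType, j' < j → ν₁ j' = ν₂ j') → ν₁ j ≠ ν₂ j →
        ∀ i : κ.ord.ToType, j < i →
          ¬ ∃ y : Fin dy → M,
            φ.Realize (Sum.elim (c ν₁) (Sum.elim y (a i))) ∧
            φ.Realize (Sum.elim (c ν₂) (Sum.elim y (a i)))) := by
  classical
  haveI iA0 : Infinite κ₀.ord.ToType := by
    rw [Cardinal.infinite_iff, Cardinal.mk_ord_toType]; exact hκ₀
  haveI : Infinite lam₀.ord.ToType := by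
    rw [Cardinal.infinite_iff, Cardinal.mk_ord_toType]; exact hlam₀
  haveI : Infinite lam.ord.ToType := by
    rw [Cardinal.infinite_iff, Cardinal.mk_ord_toType]; exact hlam
  haveI : Nonempty κ₀.ord.ToType := iA0.nonempty
  haveI : Nonempty lam.ord.ToType := Infinite.nonempty _
  haveI := Cardinal.noMaxOrder hκ₀
  let full : (L[[Idx dz dy dx κ.ord.ToType lam.ord.ToType]]).Theory :=
    (L.lhomWithConstants (Idx dz dy dx κ.ord.ToType lam.ord.ToType)).onTheory T ∪
    {s | ∃ ν i, s = sentA (L := L) φ ν i} ∪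
    {s | ∃ ν₁ ν₂, ∃ j i : κ.ord.ToType, (∀ j' < j, ν₁ j' = ν₂ j') ∧ ν₁ j ≠ ν₂ j ∧ j < i ∧
      s = sentB (L := L) φ ν₁ ν₂ i}
  have hsat : full.IsSatisfiable := by
    have hdir : Directed (· ⊆ ·) (fun S : Finset κ.ord.ToType × Finset (κ.ord.ToType → lam.ord.ToType) =>
        partTheory (A := κ.ord.ToType) (Λ := lam.ord.ToType) T φ S) := by
      intro S S'
      refine ⟨(S.1 ∪ S'.1, S.2 ∪ S'.2), ?_, ?_⟩ <;>
      · intro s hs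
        rcases hs with (hs | hs) | hs
        · exact Or.inl (Or.inl hs)
        · refine Or.inl (Or.inr ?_)
          obtain ⟨ν, hν, i, hi, rfl⟩ := hs
          exact ⟨ν, by simp [hν], i, by simp [hi], rfl⟩
        · refine Or.inr ?_
          obtain ⟨ν₁, h1, ν₂, h2, j, hj, i, hi, h3, h4, h5, rfl⟩ := hs
          exact ⟨ν₁, by simp [h1], ν₂, by simp [h2], j, by simp [hj], i, by simp [hi],
            h3, h4, h5, rfl⟩
    have hunion : full ⊆ ⋃ S, partTheory (A := κ.ord.ToType) (Λ := lam.ord.ToType) T φ S := by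
      intro s hs
      rcases hs with (hs | hs) | hs
      · exact Set.mem_iUnion.2 ⟨(∅, ∅), Or.inl (Or.inl hs)⟩
      · obtain ⟨ν, i, rfl⟩ := hs
        exact Set.mem_iUnion.2 ⟨({i}, {ν}), Or.inl (Or.inr ⟨ν, by simp, i, by simp, rfl⟩)⟩
      · obtain ⟨ν₁, ν₂, j, i, h3, h4, h5, rfl⟩ := hs
        exact Set.mem_iUnion.2 ⟨({j, i}, {ν₁, ν₂}),
          Or.inr ⟨ν₁, by simp, ν₂, by simp, j, by simp, i, by simp, h3, h4, h5, rfl⟩⟩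
    refine Theory.IsSatisfiable.mono ?_ hunion
    rw [Theory.isSatisfiable_directed_union_iff hdir]
    exact fun S => partTheory_isSatisfiable T φ M₀ a₀ b₀ c₀ h_a h_b S
  obtain ⟨N⟩ := hsat
  letI : L.Structure N := (L.lhomWithConstants (Idx dz dy dx κ.ord.ToType lam.ord.ToType)).reduct N
  haveI : (L.lhomWithConstants (Idx dz dy dx κ.ord.ToType lam.ord.ToType)).IsExpansionOn (N : Type) :=
    LHom.isExpansionOn_reduct _ _
  haveI hNT : (N : Type) ⊨ T :=
    (LHom.onTheory_model (L.lhomWithConstants (Idx dz dy dx κ.ord.ToType lam.ord.ToType)) T).1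
      (N.is_model.mono (fun s hs => Or.inl (Or.inl hs)))
  refine ⟨Theory.ModelType.of T N, fun i t => cval (L := L) (M := N) (Sum.inl (i, t) : Idx dz dy dx κ.ord.ToType lam.ord.ToType),
    fun q t => cval (L := L) (M := N) (Sum.inr (Sum.inl (q, t)) : Idx dz dy dx κ.ord.ToType lam.ord.ToType),
    fun ν t => cval (L := L) (M := N) (Sum.inr (Sum.inr (ν, t)) : Idx dz dy dx κ.ord.ToType lam.ord.ToType), ?_, ?_⟩
  · intro ν i
    have hmem : sentA (L := L) φ ν i ∈ full := Or.inl (Or.inr ⟨ν, i, rfl⟩)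
    exact (realize_sentA_iff (M := N) φ ν i).1 (full.realize_sentence_of_mem hmem)
  · intro ν₁ ν₂ j hag hne i hji
    have hmem : sentB (L := L) φ ν₁ ν₂ i ∈ full :=
      Or.inr ⟨ν₁, ν₂, j, i, hag, hne, hji, rfl⟩
    exact (realize_sentB_iff (M := N) φ ν₁ ν₂ i).1 (full.realize_sentence_of_mem hmem)

end OakAux

/-- The theory `T` satisfies the oak property as exhibited by the formula `φ(z̄, ȳ, x̄)`:
(c) `T` proves that `φ(z̄, ȳ₁, x̄) ∧ φ(z̄, ȳ₂, x̄) → ȳ₁ = ȳ₂`, and for all infinite cardinals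
`κ`, `λ` there are a model `M` of `T` and tuples `āᵢ` (`i < κ`), `b̄_η` (`η ∈ κ>λ`) and `c̄_ν`
(`ν ∈ κλ`) from `M` such that (a) if `η ⊲ ν ∈ κλ` then `M ⊨ φ[c̄_ν, b̄_η, ā_{lg η}]`, and
(b) if `η⌢⟨α⟩ ⊲ ν₁ ∈ κλ`, `η⌢⟨β⟩ ⊲ ν₂ ∈ κλ` with `α ≠ β`, and `i > lg η`, then
`M ⊨ ¬∃ȳ (φ(c̄_{ν₁}, ȳ, āᵢ) ∧ φ(c̄_{ν₂}, ȳ, āᵢ))`. Here `κ>λ` is represented as the set of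
pairs of an `i < κ` together with a function from `{j < i}` to `λ`, and clause (b) is phrased
in terms of the branches `ν₁, ν₂`: they agree below `j = lg η` and differ at `j`. -/
def OakProperty {L : FirstOrder.Language.{0, 0}} (T : L.Theory) {dz dy dx : ℕ}
    (φ : L.Formula (Fin dz ⊕ Fin dy ⊕ Fin dx)) : Prop :=
  (∀ (M : FirstOrder.Language.Theory.ModelType.{0, 0, 0} T)
      (z : Fin dz → M) (y₁ y₂ : Fin dy → M) (x : Fin dx → M),
      φ.Realize (Sum.elim z (Sum.elim y₁ x)) → φ.Realize (Sum.elim z (Sum.elim y₂ x)) →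
        y₁ = y₂) ∧
  (∀ κ lam : Cardinal.{0}, Cardinal.aleph0 ≤ κ → Cardinal.aleph0 ≤ lam →
    ∃ (M : FirstOrder.Language.Theory.ModelType.{0, 0, 0} T)
      (a : κ.ord.ToType → Fin dx → M)
      (b : (Σ i : κ.ord.ToType, ({j : κ.ord.ToType // j < i} → lam.ord.ToType)) → Fin dy → M)
      (c : (κ.ord.ToType → lam.ord.ToType) → Fin dz → M),
      (∀ (ν : κ.ord.ToType → lam.ord.ToType) (i : κ.ord.ToType),
        φ.Realize (Sum.elim (c ν) (Sum.elim (b ⟨i, fun j => ν j.val⟩) (a i)))) ∧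
      (∀ (ν₁ ν₂ : κ.ord.ToType → lam.ord.ToType) (j : κ.ord.ToType),
        (∀ j' : κ.ord.ToType, j' < j → ν₁ j' = ν₂ j') → ν₁ j ≠ ν₂ j →
        ∀ i : κ.ord.ToType, j < i →
          ¬ ∃ y : Fin dy → M,
            φ.Realize (Sum.elim (c ν₁) (Sum.elim y (a i))) ∧
            φ.Realize (Sum.elim (c ν₂) (Sum.elim y (a i)))))

/-- If the formula `φ` satisfies the uniqueness condition (c) and clauses (a) and (b) of the
oak property hold for some pair of infinite cardinals `κ₀`, `λ₀`, then they hold for every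
pair of infinite cardinals; in particular `T` has the oak property witnessed by `φ`. -/
theorem oakProperty_of_exists {L : FirstOrder.Language.{0, 0}} (T : L.Theory)
    (hT : T.IsComplete) {dz dy dx : ℕ} (φ : L.Formula (Fin dz ⊕ Fin dy ⊕ Fin dx))
    (huniq : ∀ (M : FirstOrder.Language.Theory.ModelType.{0, 0, 0} T)
      (z : Fin dz → M) (y₁ y₂ : Fin dy → M) (x : Fin dx → M),
      φ.Realize (Sum.elim z (Sum.elim y₁ x)) → φ.Realize (Sum.elim z (Sum.elim y₂ x)) →
        y₁ = y₂)
    (hexists : ∃ κ₀ lam₀ : Cardinal.{0}, Cardinal.aleph0 ≤ κ₀ ∧ Cardinal.aleph0 ≤ lam₀ ∧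
      ∃ (M : FirstOrder.Language.Theory.ModelType.{0, 0, 0} T)
        (a : κ₀.ord.ToType → Fin dx → M)
        (b : (Σ i : κ₀.ord.ToType, ({j : κ₀.ord.ToType // j < i} → lam₀.ord.ToType)) →
          Fin dy → M)
        (c : (κ₀.ord.ToType → lam₀.ord.ToType) → Fin dz → M),
        (∀ (ν : κ₀.ord.ToType → lam₀.ord.ToType) (i : κ₀.ord.ToType),
          φ.Realize (Sum.elim (c ν) (Sum.elim (b ⟨i, fun j => ν j.val⟩) (a i)))) ∧
        (∀ (ν₁ ν₂ : κ₀.ord.ToType → lam₀.ord.ToType) (j : κ₀.ord.ToType),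
          (∀ j' : κ₀.ord.ToType, j' < j → ν₁ j' = ν₂ j') → ν₁ j ≠ ν₂ j →
          ∀ i : κ₀.ord.ToType, j < i →
            ¬ ∃ y : Fin dy → M,
              φ.Realize (Sum.elim (c ν₁) (Sum.elim y (a i))) ∧
              φ.Realize (Sum.elim (c ν₂) (Sum.elim y (a i))))) :
    OakProperty T φ := by
  obtain ⟨κ₀, lam₀, hκ₀, hlam₀, M₀, a₀, b₀, c₀, h_a, h_b⟩ := hexists
  exact ⟨huniq, fun κ lam hκ hlam =>
    OakAux.oak_transfer T φ κ₀ lam₀ hκ₀ hlam₀ M₀ a₀ b₀ c₀ h_a h_b κ lam hκ hlam⟩
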